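/- Let f : 2^[n] → ℝ₊ be a normalized monotone submodular set function, let e_1, …, e_n be an enumeration of [n], write E_t = {e_1, …, e_t} (with E_0 = ∅), and let S ⊆ [n]. Assume the enumeration is greedy with respect to S: for every t ∈ [n] and every j ∈ [n]∖E_{t−1}, f_{S∩E_{t−1}}(e_t) ≥ f_{S∩E_{t−1}}(j). Let 0 < α ≤ 1 and let S* ⊆ [n] satisfy |S ∩ E_t| ≥ α·|S* ∩ E_t| for every t ∈ [n]. Then f(S) ≥ (α/(α+1)) · f(S*). -/

import Mathlib

open Finset

/-- Abel-type comparison: if partial sums of `c` are nonnegative and `m` is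
nonincreasing and nonnegative on `[0,N)`, then `∑ c s * m s ≥ 0`. -/
lemma abel_nonneg (N : ℕ) (c : ℕ → ℝ) : ∀ (m : ℕ → ℝ),
    (∀ s t, s ≤ t → t < N → m t ≤ m s) →
    (∀ t, t < N → 0 ≤ m t) →
    (∀ t, t ≤ N → 0 ≤ ∑ s ∈ Finset.range t, c s) →
    0 ≤ ∑ s ∈ Finset.range N, c s * m s := by
  induction N with
  | zero => intro m _ _ _; simp
  | succ N ih =>
    intro m hanti hpos hC
    have h1 : 0 ≤ ∑ s ∈ Finset.range N, c s * (m s - m N) := by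
      apply ih (fun s => m s - m N)
      · intro s t hst htN
        have := hanti s t hst (htN.trans (Nat.lt_succ_self N))
        simp; linarith
      · intro t htN
        have := hanti t N (Nat.le_of_lt htN) (Nat.lt_succ_self N)
        simp; linarith
      · intro t ht; exact hC t (ht.trans (Nat.le_succ N))
    have h2 : 0 ≤ m N := hpos N (Nat.lt_succ_self N)
    have h3 : 0 ≤ ∑ s ∈ Finset.range (N+1), c s := hC (N+1) le_rfl
    have key : ∑ s ∈ Finset.range (N+1), c s * m s
        = (∑ s ∈ Finset.range N, c s * (m s - m N))
          + m N * ∑ s ∈ Finset.range (N+1), c s := by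
      have expand : ∑ s ∈ Finset.range N, c s * (m s - m N)
          = (∑ s ∈ Finset.range N, c s * m s) - m N * ∑ s ∈ Finset.range N, c s := by
        rw [Finset.mul_sum, ← Finset.sum_sub_distrib]
        apply Finset.sum_congr rfl; intro s _; ring
      rw [Finset.sum_range_succ (f := fun s => c s * m s),
        Finset.sum_range_succ (f := c), expand]
      ring
    rw [key]
    have := mul_nonneg h2 h3
    linarith

/-- Let `f : 2^[n] → ℝ₊` be a normalized monotone submodular set
function, let `e_1, …, e_n` be an enumeration of `[n]` (here `e 0, …, e (n-1)`),
`E t = {e_1,…,e_t}`, and `S ⊆ [n]`. If the enumeration is greedy with respect to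
`S` (each `e_t` maximizes the marginal value with respect to `S ∩ E_{t−1}` among
remaining elements), `0 < α ≤ 1`, and `|S ∩ E_t| ≥ α·|S* ∩ E_t|` for every
`t ∈ [n]`, then `f(S) ≥ (α/(α+1))·f(S*)`. -/
theorem stmt_7 (n : ℕ) (f : Finset (Fin n) → ℝ)
    (hf_nonneg : ∀ S, 0 ≤ f S)
    (hf_norm : f ∅ = 0)
    (hf_mono : ∀ S T : Finset (Fin n), S ⊆ T → f S ≤ f T)
    (hf_submod : ∀ S T : Finset (Fin n), f (S ∪ T) + f (S ∩ T) ≤ f S + f T)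
    (e : ℕ → Fin n) (hinj : ∀ s < n, ∀ t < n, e s = e t → s = t)
    (E : ℕ → Finset (Fin n)) (hE : ∀ t, E t = (Finset.range t).image e)
    (S : Finset (Fin n))
    (hgreedy : ∀ t < n, ∀ j : Fin n, j ∉ E t →
      f (insert j (S ∩ E t)) - f (S ∩ E t)
        ≤ f (insert (e t) (S ∩ E t)) - f (S ∩ E t))
    (α : ℝ) (hα0 : 0 < α) (hα1 : α ≤ 1)
    (Sstar : Finset (Fin n))
    (hcard : ∀ t, 1 ≤ t → t ≤ n →
      α * ((Sstar ∩ E t).card : ℝ) ≤ ((S ∩ E t).card : ℝ)) :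
    f S ≥ (α / (α + 1)) * f Sstar := by
  classical
  -- membership in E
  have hEmem : ∀ t (j : Fin n), j ∈ E t ↔ ∃ s < t, e s = j := by
    intro t j; rw [hE]; simp [Finset.mem_image]
  have hEsub : ∀ s t, s ≤ t → E s ⊆ E t := by
    intro s t hst
    rw [hE s, hE t]
    exact Finset.image_subset_image (Finset.range_subset_range.2 hst)
  have hnot : ∀ s t, s ≤ t → t < n → e t ∉ E s := by
    intro s t hst htn hmem
    rw [hEmem] at hmem
    obtain ⟨u, hu, heu⟩ := hmem
    have hun : u < n := lt_of_lt_of_le hu (hst.trans htn.le)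
    have := hinj u hun t htn heu
    omega
  -- marginal decrease lemma
  have margin_anti : ∀ A B : Finset (Fin n), A ⊆ B → ∀ x, x ∉ B →
      f (insert x B) - f B ≤ f (insert x A) - f A := by
    intro A B hAB x hx
    have h := hf_submod (insert x A) B
    have hAB' : ∀ j, j ∈ A → j ∈ B := fun j h => hAB h
    have h1 : insert x A ∪ B = insert x B := by
      ext j; simp only [Finset.mem_union, Finset.mem_insert]; tauto
    have h2 : insert x A ∩ B = A := by
      ext j; simp only [Finset.mem_inter, Finset.mem_insert]
      constructor
      · rintro ⟨h3 | h3, h4⟩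
        · exact absurd (h3 ▸ h4) hx
        · exact h3
      · intro h3; exact ⟨Or.inr h3, hAB' j h3⟩
    rw [h1, h2] at h
    linarith
  -- the greedy marginal values
  set m : ℕ → ℝ := fun t => f (insert (e t) (S ∩ E t)) - f (S ∩ E t) with hm
  have hm_nonneg : ∀ t, t < n → 0 ≤ m t := by
    intro t ht
    have := hf_mono (S ∩ E t) (insert (e t) (S ∩ E t)) (Finset.subset_insert _ _)
    simp only [hm]; linarith
  have hm_anti : ∀ s t, s ≤ t → t < n → m t ≤ m s := by
    intro s t hst htn
    have hsub : S ∩ E s ⊆ S ∩ E t := Finset.inter_subset_inter (Finset.Subset.refl S) (hEsub s t hst)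
    have hx : e t ∉ S ∩ E t := by
      intro hmem
      exact hnot t t le_rfl htn (Finset.mem_of_mem_inter_right hmem)
    have h1 := margin_anti (S ∩ E s) (S ∩ E t) hsub (e t) hx
    have h2 := hgreedy s (lt_of_le_of_lt hst htn) (e t) (hnot s t hst htn)
    simp only [hm]
    linarith
  -- telescoping
  have htel : ∀ t, t ≤ n →
      f (S ∩ E t) = ∑ s ∈ Finset.range t, (if e s ∈ S then m s else 0) := by
    intro t
    induction t with
    | zero =>
      intro _
      have : E 0 = ∅ := by rw [hE]; simp
      simp [this, hf_norm]
    | succ t ih =>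
      intro htn
      have ht : t ≤ n := Nat.le_of_succ_le htn
      have hEsucc : E (t+1) = insert (e t) (E t) := by
        rw [hE (t+1), hE t, Finset.range_add_one, Finset.image_insert]
      rw [Finset.sum_range_succ, ← ih ht]
      by_cases hS : e t ∈ S
      · have heq : S ∩ E (t+1) = insert (e t) (S ∩ E t) := by
          rw [hEsucc]
          ext j
          simp only [Finset.mem_inter, Finset.mem_insert]
          constructor
          · rintro ⟨h1, h2 | h2⟩
            · exact Or.inl h2
            · exact Or.inr ⟨h1, h2⟩
          · rintro (rfl | ⟨h1, h2⟩)
            · exact ⟨hS, Or.inl rfl⟩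
            · exact ⟨h1, Or.inr h2⟩
        rw [heq]
        simp only [hS, if_true, hm]
        ring
      · have heq : S ∩ E (t+1) = S ∩ E t := by
          rw [hEsucc]
          ext j
          simp only [Finset.mem_inter, Finset.mem_insert]
          constructor
          · rintro ⟨h1, h2 | h2⟩
            · exact absurd (h2 ▸ h1) hS
            · exact ⟨h1, h2⟩
          · rintro ⟨h1, h2⟩; exact ⟨h1, Or.inr h2⟩
        rw [heq]
        simp [hS]
  -- E n = univ
  have hinjOn : ∀ t, t ≤ n → Set.InjOn e (Finset.range t : Set ℕ) := by
    intro t htn s hs u hu hsu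
    simp only [Finset.coe_range, Set.mem_Iio] at hs hu
    exact hinj s (lt_of_lt_of_le hs htn) u (lt_of_lt_of_le hu htn) hsu
  have hEn : E n = Finset.univ := by
    apply Finset.eq_univ_of_card
    rw [hE n, Finset.card_image_of_injOn (hinjOn n le_rfl), Finset.card_range,
      Fintype.card_fin]
  -- counting
  have hcount : ∀ (A : Finset (Fin n)) t, t ≤ n →
      ((A ∩ E t).card : ℝ) = ∑ s ∈ Finset.range t, (if e s ∈ A then (1:ℝ) else 0) := by
    intro A t htn
    have himg : A ∩ E t = ((Finset.range t).filter (fun s => e s ∈ A)).image e := by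
      ext j
      simp only [Finset.mem_inter, hEmem, Finset.mem_image, Finset.mem_filter,
        Finset.mem_range]
      constructor
      · rintro ⟨hjA, s, hs, rfl⟩; exact ⟨s, ⟨hs, hjA⟩, rfl⟩
      · rintro ⟨s, ⟨hs, hA⟩, rfl⟩; exact ⟨hA, s, hs, rfl⟩
    have hinj2 : Set.InjOn e ((Finset.range t).filter (fun s => e s ∈ A) : Set ℕ) :=
      Set.InjOn.mono (by intro x hx; simp at hx ⊢; exact hx.1) (hinjOn t htn)
    rw [himg, Finset.card_image_of_injOn hinj2]
    rw [Finset.sum_boole]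
  -- Abel application
  set a : ℕ → ℝ := fun s => if e s ∈ Sstar \ S then (1:ℝ) else 0 with ha
  set b : ℕ → ℝ := fun s => if e s ∈ S then (1:ℝ) else 0 with hb
  have habel : 0 ≤ ∑ s ∈ Finset.range n, (b s - α * a s) * m s := by
    apply abel_nonneg n _ m hm_anti hm_nonneg
    intro t htn
    have hsplit : ∑ s ∈ Finset.range t, (b s - α * a s)
        = ((S ∩ E t).card : ℝ) - α * (((Sstar \ S) ∩ E t).card : ℝ) := by
      rw [Finset.sum_sub_distrib, ← Finset.mul_sum, ← hcount S t htn,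
        ← hcount (Sstar \ S) t htn]
    rw [hsplit]
    rcases Nat.eq_zero_or_pos t with rfl | htpos
    · have : E 0 = ∅ := by rw [hE]; simp
      simp [this]
    · have h1 := hcard t htpos htn
      have h2 : (((Sstar \ S) ∩ E t).card : ℝ) ≤ ((Sstar ∩ E t).card : ℝ) := by
        exact_mod_cast Finset.card_le_card
          (Finset.inter_subset_inter (Finset.sdiff_subset) (le_refl (E t)))
      nlinarith
  -- ∑ b s * m s = f S
  have hbm : ∑ s ∈ Finset.range n, b s * m s = f S := by
    have h1 : f (S ∩ E n) = ∑ s ∈ Finset.range n, (if e s ∈ S then m s else 0) :=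
      htel n le_rfl
    rw [hEn, Finset.inter_univ] at h1
    rw [h1]
    apply Finset.sum_congr rfl
    intro s _
    simp only [hb]
    split_ifs <;> simp
  -- submodularity union bound
  have hunion : ∀ T : Finset (Fin n),
      f (S ∪ T) ≤ f S + ∑ j ∈ T \ S, (f (insert j S) - f S) := by
    intro T
    induction T using Finset.induction_on with
    | empty => simp
    | insert x T hx ih =>
      by_cases hxS : x ∈ S
      · have h1 : S ∪ insert x T = S ∪ T := by
          rw [Finset.union_insert, Finset.insert_eq_self.2 (Finset.mem_union_left T hxS)]
        have h2 : insert x T \ S = T \ S := by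
          rw [Finset.insert_sdiff_of_mem _ hxS]
        rw [h1, h2]; exact ih
      · have h1 : S ∪ insert x T = insert x (S ∪ T) := by
          rw [Finset.union_insert]
        have hxST : x ∉ S ∪ T := by
          simp only [Finset.mem_union]; tauto
        have h2 := margin_anti S (S ∪ T) Finset.subset_union_left x hxST
        have h3 : insert x T \ S = insert x (T \ S) := by
          rw [Finset.insert_sdiff_of_notMem _ hxS]
        have h4 : x ∉ T \ S := fun h => hx (Finset.mem_sdiff.1 h).1
        rw [h1, h3, Finset.sum_insert h4]
        linarith
  -- bound the marginal sum by ∑ a s * m s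
  have ham : ∑ j ∈ Sstar \ S, (f (insert j S) - f S) ≤ ∑ s ∈ Finset.range n, a s * m s := by
    have himg : Sstar \ S = ((Finset.range n).filter (fun s => e s ∈ Sstar \ S)).image e := by
      ext j
      simp only [Finset.mem_image, Finset.mem_filter, Finset.mem_range]
      constructor
      · intro hj
        have hjEn : j ∈ E n := hEn ▸ Finset.mem_univ j
        rw [hEmem] at hjEn
        obtain ⟨s, hs, rfl⟩ := hjEn
        exact ⟨s, ⟨hs, hj⟩, rfl⟩
      · rintro ⟨s, ⟨hs, hmem⟩, rfl⟩
        exact hmem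
    have hinj3 : Set.InjOn e ((Finset.range n).filter (fun s => e s ∈ Sstar \ S) : Set ℕ) :=
      Set.InjOn.mono (by intro x hx; simp at hx ⊢; exact hx.1) (hinjOn n le_rfl)
    rw [himg, Finset.sum_image (fun x hx y hy h => hinj3 hx hy h)]
    have hrhs : ∑ s ∈ Finset.range n, a s * m s
        = ∑ s ∈ (Finset.range n).filter (fun s => e s ∈ Sstar \ S), m s := by
      rw [Finset.sum_filter]
      apply Finset.sum_congr rfl
      intro s _
      simp only [ha]
      split_ifs <;> simp
    rw [hrhs]
    apply Finset.sum_le_sum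
    intro s hs
    simp only [Finset.mem_filter, Finset.mem_range] at hs
    have hnotS : e s ∉ S := (Finset.mem_sdiff.1 hs.2).2
    have := margin_anti (S ∩ E s) S Finset.inter_subset_left (e s) hnotS
    simpa only [hm] using this
  -- combine
  have hstar : f Sstar ≤ f (S ∪ Sstar) :=
    hf_mono _ _ Finset.subset_union_right
  have hsum_am_nonneg_bound : α * ∑ s ∈ Finset.range n, a s * m s ≤ f S := by
    have hexp : ∑ s ∈ Finset.range n, (b s - α * a s) * m s
        = (∑ s ∈ Finset.range n, b s * m s) - α * ∑ s ∈ Finset.range n, a s * m s := by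
      rw [Finset.mul_sum, ← Finset.sum_sub_distrib]
      apply Finset.sum_congr rfl
      intro s _; ring
    rw [hexp, hbm] at habel
    linarith
  have hfinal : f Sstar ≤ f S + ∑ s ∈ Finset.range n, a s * m s :=
    le_trans hstar (le_trans (hunion Sstar) (by linarith))
  -- algebra
  rw [ge_iff_le, div_mul_eq_mul_div, div_le_iff₀ (by linarith : (0:ℝ) < α + 1)]
  nlinarith [mul_le_mul_of_nonneg_left hfinal hα0.le]
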